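/- Let N ≥ 2, L > 0, and let F : [-L, 0] → ℝ be continuous, nonnegative and nonincreasing (F(x) ≤ F(y) whenever x > y). Then there exists exactly one configuration -L ≤ x_N < x_{N-1} < ... < x_1 < x_0 = 0 such that, setting δ_k = x_{k-1} - x_k and f_k = δ_k^{-2} for k = 1, ..., N, one has f_{k+1} + F(x_k) = f_k for all k = 1, ..., N-1, and moreover either (x_N = -L and f_N ≥ F(-L)) or (x_N > -L and f_N = F(x_N)). -/

import Mathlib

namespace EquilibAux

/-- Shooting map: `(P G t k).1 = x_k`, `(P G t k).2 = f_{k+1}` where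
`x_0 = 0`, `f_1 = t⁻²`, `x_{k+1} = x_k - √(f_{k+1}⁻¹)`, `f_{k+2} = f_{k+1} - G x_{k+1}`. -/
noncomputable def P (G : ℝ → ℝ) (t : ℝ) : ℕ → ℝ × ℝ
  | 0 => (0, (t ^ 2)⁻¹)
  | (k+1) =>
      ((P G t k).1 - Real.sqrt ((P G t k).2)⁻¹,
       (P G t k).2 - G ((P G t k).1 - Real.sqrt ((P G t k).2)⁻¹))

def dom (G : ℝ → ℝ) (k : ℕ) : Set ℝ := {t | 0 < t ∧ ∀ j < k, 0 < (P G t j).2}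

variable {G : ℝ → ℝ} {t t1 t2 : ℝ} {k m : ℕ}

lemma P_zero (t : ℝ) : P G t 0 = (0, (t ^ 2)⁻¹) := rfl

lemma P_succ_fst (t : ℝ) (k : ℕ) :
    (P G t (k+1)).1 = (P G t k).1 - Real.sqrt ((P G t k).2)⁻¹ := rfl

lemma P_succ_snd (t : ℝ) (k : ℕ) :
    (P G t (k+1)).2 = (P G t k).2 - G ((P G t (k+1)).1) := rfl

lemma dom_mono (h : k ≤ m) : dom G m ⊆ dom G k :=
  fun t ht => ⟨ht.1, fun j hj => ht.2 j (lt_of_lt_of_le hj h)⟩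

lemma inv_lt_inv'' {a b : ℝ} (ha : 0 < a) (hab : a < b) : b⁻¹ < a⁻¹ := by
  have := one_div_lt_one_div_of_lt ha hab
  simpa using this

lemma inv_le_inv'' {a b : ℝ} (ha : 0 < a) (hab : a ≤ b) : b⁻¹ ≤ a⁻¹ := by
  have := one_div_le_one_div_of_le ha hab
  simpa using this

lemma gap_eq (t : ℝ) (k : ℕ) :
    (P G t k).1 - (P G t (k+1)).1 = Real.sqrt ((P G t k).2)⁻¹ := by
  rw [P_succ_fst]; ring

lemma gap_pos (h : 0 < (P G t k).2) : (P G t (k+1)).1 < (P G t k).1 := by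
  have h1 : 0 < Real.sqrt ((P G t k).2)⁻¹ := Real.sqrt_pos.2 (inv_pos.2 h)
  rw [P_succ_fst]; linarith

lemma gap_sq (h : 0 < (P G t k).2) :
    (((P G t k).1 - (P G t (k+1)).1) ^ 2)⁻¹ = (P G t k).2 := by
  rw [gap_eq, Real.sq_sqrt (inv_nonneg.2 h.le), inv_inv]

/-- chain of decreasing positions -/
lemma chain {x : ℕ → ℝ} {N : ℕ} (h : ∀ k < N, x (k+1) < x k) {j k : ℕ}
    (hjk : j ≤ k) (hkN : k ≤ N) : x k ≤ x j := by
  induction k with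
  | zero => simp_all
  | succ k ih =>
    rcases Nat.eq_or_lt_of_le hjk with h1 | h1
    · simp [h1]
    · exact le_trans (h k (by omega)).le (ih (by omega) (by omega))

lemma chain_strict {x : ℕ → ℝ} {N : ℕ} (h : ∀ k < N, x (k+1) < x k) {j k : ℕ}
    (hjk : j < k) (hkN : k ≤ N) : x k < x j := by
  have h1 : x k ≤ x (j+1) := chain h hjk hkN
  exact lt_of_le_of_lt h1 (h j (by omega))

/-- openness of the domain and continuity of the shooting map -/
lemma contOpen (hGc : Continuous G) :
    ∀ k, IsOpen (dom G k) ∧ ContinuousOn (fun t => P G t k) (dom G k) := by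
  intro k
  induction k with
  | zero =>
    constructor
    · have : dom G 0 = Set.Ioi (0:ℝ) := by
        ext t; simp [dom]
      rw [this]; exact isOpen_Ioi
    · have hc : ContinuousOn (fun t : ℝ => (((0:ℝ), ((t ^ 2)⁻¹ : ℝ)) : ℝ × ℝ)) (dom G 0) := by
        apply ContinuousOn.prodMk continuousOn_const
        exact ((continuous_pow 2).continuousOn.inv₀ (fun t ht => pow_ne_zero 2 (ne_of_gt ht.1)))
      exact hc
  | succ k ih =>
    have hsub : dom G (k+1) ⊆ dom G k := dom_mono (Nat.le_succ k)
    have hset : dom G (k+1) = dom G k ∩ (fun t => (P G t k).2) ⁻¹' Set.Ioi 0 := by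
      ext t
      constructor
      · intro ht
        exact ⟨hsub ht, ht.2 k (Nat.lt_succ_self k)⟩
      · intro ⟨ht1, ht2⟩
        refine ⟨ht1.1, fun j hj => ?_⟩
        rcases (by omega : j < k ∨ j = k) with h | h
        · exact ht1.2 j h
        · subst h; exact ht2
    have hopen : IsOpen (dom G (k+1)) := by
      rw [hset]
      exact (ih.2.snd).isOpen_inter_preimage ih.1 isOpen_Ioi
    refine ⟨hopen, ?_⟩
    have c1 : ContinuousOn (fun t => (P G t k).1) (dom G (k+1)) := (ih.2.fst).mono hsub
    have c2 : ContinuousOn (fun t => (P G t k).2) (dom G (k+1)) := (ih.2.snd).mono hsub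
    have cinv : ContinuousOn (fun t => ((P G t k).2)⁻¹) (dom G (k+1)) :=
      c2.inv₀ (fun t ht => ne_of_gt (ht.2 k (Nat.lt_succ_self k)))
    have csqrt : ContinuousOn (fun t => Real.sqrt ((P G t k).2)⁻¹) (dom G (k+1)) :=
      Real.continuous_sqrt.comp_continuousOn cinv
    have cx : ContinuousOn (fun t => (P G t k).1 - Real.sqrt ((P G t k).2)⁻¹) (dom G (k+1)) :=
      c1.sub csqrt
    have cf : ContinuousOn (fun t => (P G t k).2 -
        G ((P G t k).1 - Real.sqrt ((P G t k).2)⁻¹)) (dom G (k+1)) :=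
      c2.sub (hGc.comp_continuousOn cx)
    exact ContinuousOn.prodMk cx cf

/-- strict monotonicity in the shooting parameter -/
lemma mono (hGa : Antitone G) (ht1 : 0 < t1) (h12 : t1 < t2) :
    ∀ k, t2 ∈ dom G k → t1 ∈ dom G k ∧ (P G t2 k).2 < (P G t1 k).2 ∧
      (P G t2 k).1 ≤ (P G t1 k).1 ∧ (k ≠ 0 → (P G t2 k).1 < (P G t1 k).1) := by
  intro k
  induction k with
  | zero =>
    intro ht2
    refine ⟨⟨ht1, by omega⟩, ?_, le_refl _, by simp⟩
    exact inv_lt_inv'' (by positivity) (by nlinarith)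
  | succ k ih =>
    intro ht2
    obtain ⟨hd1, hf, hx, _⟩ := ih (dom_mono (Nat.le_succ k) ht2)
    have ft2 : 0 < (P G t2 k).2 := ht2.2 k (Nat.lt_succ_self k)
    have ft1 : 0 < (P G t1 k).2 := ft2.trans hf
    have hdom1 : t1 ∈ dom G (k+1) := by
      refine ⟨ht1, fun j hj => ?_⟩
      rcases (by omega : j < k ∨ j = k) with h | h
      · exact hd1.2 j h
      · subst h; exact ft1
    have hsq : Real.sqrt ((P G t1 k).2)⁻¹ < Real.sqrt ((P G t2 k).2)⁻¹ :=
      Real.sqrt_lt_sqrt (inv_nonneg.2 ft1.le) (inv_lt_inv'' ft2 hf)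
    have hxs : (P G t2 (k+1)).1 < (P G t1 (k+1)).1 := by
      rw [P_succ_fst, P_succ_fst]; linarith
    refine ⟨hdom1, ?_, hxs.le, fun _ => hxs⟩
    have hG : G ((P G t1 (k+1)).1) ≤ G ((P G t2 (k+1)).1) := hGa hxs.le
    rw [P_succ_snd, P_succ_snd]
    linarith

end EquilibAux

/-- An equilibrium (fixed-point) configuration of `N+1` charges
`-L ≤ x N < ... < x 1 < x 0 = 0` on `[-L, 0]` under external force `F`:
with gaps `δ k = x (k-1) - x k` and `f k = (δ k)⁻²`, the force balance
`f (k+1) + F (x k) = f k` holds for `k = 1, ..., N-1`, and at the left end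
either `x N = -L` with `f N ≥ F (-L)`, or `x N > -L` with `f N = F (x N)`. -/
def IsEquilib (N : ℕ) (L : ℝ) (F : ℝ → ℝ) (x : ℕ → ℝ) : Prop :=
  x 0 = 0 ∧ (∀ k < N, x (k + 1) < x k) ∧ -L ≤ x N ∧
  (∀ k, 1 ≤ k → k < N →
    ((x k - x (k + 1)) ^ 2)⁻¹ + F (x k) = ((x (k - 1) - x k) ^ 2)⁻¹) ∧
  ((x N = -L ∧ F (-L) ≤ ((x (N - 1) - x N) ^ 2)⁻¹) ∨
   (-L < x N ∧ ((x (N - 1) - x N) ^ 2)⁻¹ = F (x N)))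

/-- For `N ≥ 2`, `L > 0` and `F` continuous, nonnegative and
nonincreasing on `[-L, 0]`, the equilibrium configuration exists and is unique. -/
theorem existence_uniqueness_equilibrium
    (N : ℕ) (hN : 2 ≤ N) (L : ℝ) (hL : 0 < L) (F : ℝ → ℝ)
    (hFcont : ContinuousOn F (Set.Icc (-L) 0))
    (hFnonneg : ∀ z ∈ Set.Icc (-L) 0, 0 ≤ F z)
    (hFanti : AntitoneOn F (Set.Icc (-L) 0)) :
    ∃ x : ℕ → ℝ, IsEquilib N L F x ∧
      ∀ y : ℕ → ℝ, IsEquilib N L F y → ∀ k ≤ N, y k = x k := by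
  classical
  open EquilibAux in
  set clamp : ℝ → ℝ := fun z => max (-L) (min z 0) with hclampdef
  have hclamp_mem : ∀ z, clamp z ∈ Set.Icc (-L) 0 := by
    intro z
    exact ⟨le_max_left _ _, max_le (by linarith) (min_le_right _ _)⟩
  set G : ℝ → ℝ := fun z => F (clamp z) with hGdef
  have hGeq : ∀ z ∈ Set.Icc (-L) 0, G z = F z := by
    intro z hz
    have h1 : clamp z = z := by
      simp only [hclampdef]
      rw [min_eq_left hz.2, max_eq_right hz.1]
    simp [hGdef, h1]
  have hclamp_cont : Continuous clamp := continuous_const.max (continuous_id.min continuous_const)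
  have hGc : Continuous G := hFcont.comp_continuous hclamp_cont hclamp_mem
  have hGanti : Antitone G := by
    intro a b hab
    exact hFanti (hclamp_mem a) (hclamp_mem b) (max_le_max le_rfl (min_le_min hab le_rfl))
  have hGnn : ∀ z, 0 ≤ G z := fun z => hFnonneg _ (hclamp_mem z)
  have hMnn : 0 ≤ F (-L) := hFnonneg _ ⟨le_rfl, by linarith⟩
  have hGM : ∀ z, G z ≤ F (-L) := fun z =>
    hFanti ⟨le_rfl, by linarith⟩ (hclamp_mem z) (hclamp_mem z).1
  set M : ℝ := F (-L) with hMdef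
  set C : ℝ := ((N:ℝ)/L)^2 + M + 1 with hCdef
  have hNpos : (0:ℝ) < (N:ℝ) := by exact_mod_cast (by omega : 0 < N)
  have hCpos : 0 < C := by positivity
  set B : ℝ := (N:ℝ) * M + C with hBdef
  have hB : 0 < B := by positivity
  set t0 : ℝ := (Real.sqrt B)⁻¹ with ht0def
  have ht0 : 0 < t0 := by
    rw [ht0def]; exact inv_pos.2 (Real.sqrt_pos.2 hB)
  have hft0 : ((t0 ^ 2)⁻¹ : ℝ) = B := by
    rw [ht0def, inv_pow, inv_inv, Real.sq_sqrt hB.le]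
  have hfC : ∀ j : ℕ, j ≤ N → C ≤ B - (j:ℝ) * M := by
    intro j hj
    have hjN : (j:ℝ) ≤ (N:ℝ) := by exact_mod_cast hj
    rw [hBdef]; nlinarith
  have hsmall : ∀ j : ℕ, j ≤ N → t0 ∈ EquilibAux.dom G j ∧
      B - (j:ℝ) * M ≤ (EquilibAux.P G t0 j).2 ∧
      -((j:ℝ) * Real.sqrt C⁻¹) ≤ (EquilibAux.P G t0 j).1 := by
    intro j
    induction j with
    | zero =>
      intro _
      refine ⟨⟨ht0, by omega⟩, ?_, ?_⟩
      · rw [EquilibAux.P_zero]; simp [hft0]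
      · rw [EquilibAux.P_zero]; simp
    | succ j ih =>
      intro hj
      obtain ⟨hd, hf, hx⟩ := ih (by omega)
      have hCf : C ≤ (EquilibAux.P G t0 j).2 := le_trans (hfC j (by omega)) hf
      have hfpos : 0 < (EquilibAux.P G t0 j).2 := lt_of_lt_of_le hCpos hCf
      have hd1 : t0 ∈ EquilibAux.dom G (j+1) := by
        refine ⟨ht0, fun i hi => ?_⟩
        rcases (by omega : i < j ∨ i = j) with h | h
        · exact hd.2 i h
        · subst h; exact hfpos
      refine ⟨hd1, ?_, ?_⟩
      · rw [EquilibAux.P_succ_snd]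
        have := hGM ((EquilibAux.P G t0 (j+1)).1)
        push_cast
        linarith
      · have hsq : Real.sqrt ((EquilibAux.P G t0 j).2)⁻¹ ≤ Real.sqrt C⁻¹ :=
          Real.sqrt_le_sqrt (EquilibAux.inv_le_inv'' hCpos hCf)
        rw [EquilibAux.P_succ_fst]
        push_cast
        linarith
  -- the shooting set
  set S1 : Set ℝ := {t | t ∈ EquilibAux.dom G N ∧ -L ≤ (EquilibAux.P G t N).1 ∧
      G ((EquilibAux.P G t N).1) ≤ (EquilibAux.P G t (N-1)).2} with hS1def
  have ht0S1 : t0 ∈ S1 := by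
    obtain ⟨hd, hf, hx⟩ := hsmall N le_rfl
    have hsqC : Real.sqrt C⁻¹ ≤ L / N := by
      rw [Real.sqrt_inv]
      have h1 : (N:ℝ)/L ≤ Real.sqrt C := by
        apply Real.le_sqrt_of_sq_le
        rw [hCdef]; linarith
      have h2 : (0:ℝ) < (N:ℝ)/L := by positivity
      calc (Real.sqrt C)⁻¹ ≤ ((N:ℝ)/L)⁻¹ := EquilibAux.inv_le_inv'' h2 h1
        _ = L / N := by rw [inv_div]
    refine ⟨hd, ?_, ?_⟩
    · have : (N:ℝ) * Real.sqrt C⁻¹ ≤ L := by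
        calc (N:ℝ) * Real.sqrt C⁻¹ ≤ (N:ℝ) * (L / N) := by
              exact mul_le_mul_of_nonneg_left hsqC hNpos.le
          _ = L := by field_simp
      linarith
    · obtain ⟨hd', hf', _⟩ := hsmall (N-1) (by omega)
      have hcast : ((N - 1 : ℕ) : ℝ) = (N:ℝ) - 1 := by
        push_cast [Nat.cast_sub (by omega : 1 ≤ N)]; ring
      have : M ≤ (EquilibAux.P G t0 (N-1)).2 := by
        rw [hcast] at hf'
        have : B - ((N:ℝ) - 1) * M = M + C := by rw [hBdef]; ring
        rw [this] at hf'
        linarith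
      exact le_trans (hGM _) this
  -- a priori lower bound on the `f`'s along `S1`
  have hfL : ∀ t ∈ S1, ∀ j < N, (L ^ 2)⁻¹ ≤ (EquilibAux.P G t j).2 := by
    intro t ht j hj
    have hfj : 0 < (EquilibAux.P G t j).2 := ht.1.2 j hj
    have hxdec : ∀ k < N, (EquilibAux.P G t (k+1)).1 < (EquilibAux.P G t k).1 :=
      fun k hk => EquilibAux.gap_pos (ht.1.2 k hk)
    have hxj : (EquilibAux.P G t j).1 ≤ 0 := by
      have h0 := EquilibAux.chain (x := fun k => (EquilibAux.P G t k).1) hxdec (Nat.zero_le j) (show j ≤ N by omega)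
      simpa [EquilibAux.P_zero] using h0
    have hxj1 : -L ≤ (EquilibAux.P G t (j+1)).1 :=
      le_trans ht.2.1 (EquilibAux.chain (x := fun k => (EquilibAux.P G t k).1) hxdec (show j+1 ≤ N by omega) (le_refl N))
    have hgapL : (EquilibAux.P G t j).1 - (EquilibAux.P G t (j+1)).1 ≤ L := by linarith
    rw [EquilibAux.gap_eq] at hgapL
    have hinv : ((EquilibAux.P G t j).2)⁻¹ ≤ L ^ 2 := by
      have h2 := pow_le_pow_left₀ (Real.sqrt_nonneg _) hgapL 2
      rwa [Real.sq_sqrt (inv_nonneg.2 hfj.le)] at h2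
    have := EquilibAux.inv_le_inv'' (inv_pos.2 hfj) hinv
    rwa [inv_inv] at this
  have hS1bdd : ∀ t ∈ S1, t ≤ L := by
    intro t ht
    have htpos : 0 < t := ht.1.1
    have hx1 : (EquilibAux.P G t 1).1 = -t := by
      rw [EquilibAux.P_succ_fst, EquilibAux.P_zero]
      simp [Real.sqrt_sq htpos.le]
    have hxdec : ∀ k < N, (EquilibAux.P G t (k+1)).1 < (EquilibAux.P G t k).1 :=
      fun k hk => EquilibAux.gap_pos (ht.1.2 k hk)
    have hxN1 : (EquilibAux.P G t N).1 ≤ (EquilibAux.P G t 1).1 :=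
      EquilibAux.chain (x := fun k => (EquilibAux.P G t k).1) hxdec (show 1 ≤ N by omega) (le_refl N)
    have := ht.2.1
    rw [hx1] at hxN1
    linarith
  have hS1ne : S1.Nonempty := ⟨t0, ht0S1⟩
  have hbdd : BddAbove S1 := ⟨L, fun t ht => hS1bdd t ht⟩
  set tstar : ℝ := sSup S1 with htstardef
  have htpos : 0 < tstar := lt_of_lt_of_le ht0 (le_csSup hbdd ht0S1)
  have hclos : tstar ∈ closure S1 := csSup_mem_closure hS1ne hbdd
  have hneb := mem_closure_iff_nhdsWithin_neBot.1 hclos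
  have hlim : ∀ (g : ℝ → ℝ) (c : ℝ), ContinuousAt g tstar → (∀ t ∈ S1, c ≤ g t) →
      c ≤ g tstar := by
    intro g c hg hgs
    haveI := hneb
    refine ge_of_tendsto (hg.tendsto.mono_left (nhdsWithin_le_nhds (s := S1))) ?_
    exact eventually_nhdsWithin_of_forall hgs
  have hdomstar : ∀ j, j ≤ N → tstar ∈ EquilibAux.dom G j := by
    intro j
    induction j with
    | zero => intro _; exact ⟨htpos, by omega⟩
    | succ j ih =>
      intro hj
      have hdj : tstar ∈ EquilibAux.dom G j := ih (by omega)
      have hcont : ContinuousAt (fun t => (EquilibAux.P G t j).2) tstar :=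
        ((EquilibAux.contOpen hGc j).2.snd).continuousAt
          (((EquilibAux.contOpen hGc j).1).mem_nhds hdj)
      have hge : (L ^ 2)⁻¹ ≤ (EquilibAux.P G tstar j).2 :=
        hlim _ _ hcont (fun t ht => hfL t ht j (by omega))
      refine ⟨htpos, fun i hi => ?_⟩
      rcases (by omega : i < j ∨ i = j) with h | h
      · exact hdj.2 i h
      · subst h; exact lt_of_lt_of_le (by positivity) hge
  have htstarN : tstar ∈ EquilibAux.dom G N := hdomstar N le_rfl
  have hcontxN : ContinuousAt (fun t => (EquilibAux.P G t N).1) tstar :=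
    ((EquilibAux.contOpen hGc N).2.fst).continuousAt
      (((EquilibAux.contOpen hGc N).1).mem_nhds htstarN)
  have hcontfN : ContinuousAt (fun t => (EquilibAux.P G t (N-1)).2) tstar :=
    ((EquilibAux.contOpen hGc (N-1)).2.snd).continuousAt
      (((EquilibAux.contOpen hGc (N-1)).1).mem_nhds (hdomstar (N-1) (by omega)))
  have hxNstar : -L ≤ (EquilibAux.P G tstar N).1 :=
    hlim _ _ hcontxN (fun t ht => ht.2.1)
  have hfstar : G ((EquilibAux.P G tstar N).1) ≤ (EquilibAux.P G tstar (N-1)).2 := by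
    have hc : ContinuousAt
        (fun t => (EquilibAux.P G t (N-1)).2 - G ((EquilibAux.P G t N).1)) tstar :=
      hcontfN.sub (hGc.continuousAt.comp hcontxN)
    have := hlim _ 0 hc (fun t ht => by
      show (0:ℝ) ≤ (EquilibAux.P G t (N-1)).2 - G ((EquilibAux.P G t N).1)
      linarith [ht.2.2])
    linarith
  have htstarS1 : tstar ∈ S1 := ⟨htstarN, hxNstar, hfstar⟩
  -- dichotomy at the sup
  have hdich : (EquilibAux.P G tstar N).1 = -L ∨
      (EquilibAux.P G tstar (N-1)).2 = G ((EquilibAux.P G tstar N).1) := by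
    by_contra hcon
    push_neg at hcon
    obtain ⟨h1, h2⟩ := hcon
    have hx : -L < (EquilibAux.P G tstar N).1 := lt_of_le_of_ne hxNstar (Ne.symm h1)
    have hf : G ((EquilibAux.P G tstar N).1) < (EquilibAux.P G tstar (N-1)).2 :=
      lt_of_le_of_ne hfstar (fun h => h2 h.symm)
    set V1 : Set ℝ := EquilibAux.dom G N ∩ (fun t => (EquilibAux.P G t N).1) ⁻¹' Set.Ioi (-L)
      with hV1def
    have hV1open : IsOpen V1 :=
      ((EquilibAux.contOpen hGc N).2.fst).isOpen_inter_preimage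
        (EquilibAux.contOpen hGc N).1 isOpen_Ioi
    set V : Set ℝ := V1 ∩
      (fun t => (EquilibAux.P G t (N-1)).2 - G ((EquilibAux.P G t N).1)) ⁻¹' Set.Ioi 0
      with hVdef
    have hVopen : IsOpen V := by
      have hcV1 : ContinuousOn
          (fun t => (EquilibAux.P G t (N-1)).2 - G ((EquilibAux.P G t N).1)) V1 := by
        have hsub : V1 ⊆ EquilibAux.dom G N := Set.inter_subset_left
        have hsub' : V1 ⊆ EquilibAux.dom G (N-1) :=
          fun t ht => EquilibAux.dom_mono (by omega) (hsub ht)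
        exact (((EquilibAux.contOpen hGc (N-1)).2.snd).mono hsub').sub
          (hGc.comp_continuousOn (((EquilibAux.contOpen hGc N).2.fst).mono hsub))
      exact hcV1.isOpen_inter_preimage hV1open isOpen_Ioi
    have htV : tstar ∈ V := ⟨⟨htstarN, hx⟩, by simp only [Set.mem_preimage, Set.mem_Ioi]; linarith⟩
    obtain ⟨ε, hε, hball⟩ := Metric.isOpen_iff.1 hVopen tstar htV
    have htV' : tstar + ε/2 ∈ V := by
      apply hball
      rw [Metric.mem_ball, Real.dist_eq]
      rw [show tstar + ε/2 - tstar = ε/2 by ring, abs_of_pos (by linarith)]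
      linarith
    have htS1' : tstar + ε/2 ∈ S1 := by
      obtain ⟨⟨hd, hx'⟩, hf'⟩ := htV'
      simp only [Set.mem_preimage, Set.mem_Ioi] at hx' hf'
      exact ⟨hd, hx'.le, by linarith⟩
    have := le_csSup hbdd htS1'
    linarith
  -- the equilibrium configuration
  have hxdecstar : ∀ k < N, (EquilibAux.P G tstar (k+1)).1 < (EquilibAux.P G tstar k).1 :=
    fun k hk => EquilibAux.gap_pos (htstarN.2 k hk)
  have hx0 : (EquilibAux.P G tstar 0).1 = 0 := by rw [EquilibAux.P_zero]
  have hxmem : ∀ k ≤ N, (EquilibAux.P G tstar k).1 ∈ Set.Icc (-L) 0 := by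
    intro k hk
    constructor
    · exact le_trans hxNstar (EquilibAux.chain (x := fun k => (EquilibAux.P G tstar k).1)
        hxdecstar hk (le_refl N))
    · have := EquilibAux.chain (x := fun k => (EquilibAux.P G tstar k).1) hxdecstar
        (Nat.zero_le k) (show k ≤ N from hk)
      simpa [hx0] using this
  have hgapsq : ∀ k < N,
      (((EquilibAux.P G tstar k).1 - (EquilibAux.P G tstar (k+1)).1) ^ 2)⁻¹ =
        (EquilibAux.P G tstar k).2 :=
    fun k hk => EquilibAux.gap_sq (htstarN.2 k hk)
  have hfNsq : (((EquilibAux.P G tstar (N-1)).1 - (EquilibAux.P G tstar N).1) ^ 2)⁻¹ =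
      (EquilibAux.P G tstar (N-1)).2 := by
    obtain ⟨N', hN'⟩ : ∃ N', N = N' + 1 := ⟨N - 1, by omega⟩
    subst hN'
    simpa [Nat.add_sub_cancel] using hgapsq N' (by omega)
  refine ⟨fun k => (EquilibAux.P G tstar k).1, ?_, ?_⟩
  · refine ⟨hx0, hxdecstar, hxNstar, ?_, ?_⟩
    · intro k hk1 hkN
      show (((EquilibAux.P G tstar k).1 - (EquilibAux.P G tstar (k+1)).1) ^ 2)⁻¹ +
          F ((EquilibAux.P G tstar k).1) =
          (((EquilibAux.P G tstar (k-1)).1 - (EquilibAux.P G tstar k).1) ^ 2)⁻¹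
      obtain ⟨j, rfl⟩ : ∃ j, k = j + 1 := ⟨k - 1, by omega⟩
      simp only [Nat.add_sub_cancel]
      have e1 := hgapsq (j+1) hkN
      have e2 := hgapsq j (by omega)
      have hFG : G ((EquilibAux.P G tstar (j+1)).1) = F ((EquilibAux.P G tstar (j+1)).1) :=
        hGeq _ (hxmem (j+1) (by omega))
      have e3 := EquilibAux.P_succ_snd (G := G) tstar j
      rw [e1, e2, ← hFG]
      linarith
    · show (EquilibAux.P G tstar N).1 = -L ∧
          F (-L) ≤ (((EquilibAux.P G tstar (N-1)).1 - (EquilibAux.P G tstar N).1) ^ 2)⁻¹ ∨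
          (-L < (EquilibAux.P G tstar N).1 ∧
          (((EquilibAux.P G tstar (N-1)).1 - (EquilibAux.P G tstar N).1) ^ 2)⁻¹ =
            F ((EquilibAux.P G tstar N).1))
      rcases hdich with h | h
      · left
        refine ⟨h, ?_⟩
        rw [hfNsq]
        have hGF : G ((EquilibAux.P G tstar N).1) = F (-L) := by
          rw [h]; exact hGeq _ ⟨le_rfl, by linarith⟩
        rw [← hGF]; exact hfstar
      · by_cases hxb : (EquilibAux.P G tstar N).1 = -L
        · left
          refine ⟨hxb, ?_⟩
          rw [hfNsq, h, hxb]
          exact (hGeq (-L) ⟨le_rfl, by linarith⟩).symm.le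
        · right
          refine ⟨lt_of_le_of_ne hxNstar (Ne.symm hxb), ?_⟩
          rw [hfNsq, h]
          exact hGeq _ (hxmem N le_rfl)
  -- uniqueness
  · intro y hy
    obtain ⟨hy0, hydec, hyN, hybal, hybdry⟩ := hy
    have hy1 : y 1 < 0 := by rw [← hy0]; exact hydec 0 (by omega)
    set s : ℝ := -(y 1) with hsdef
    have hs : 0 < s := by rw [hsdef]; linarith
    have hychain : ∀ {j k : ℕ}, j ≤ k → k ≤ N → y k ≤ y j :=
      fun hjk hkN => EquilibAux.chain (x := y) hydec hjk hkN
    have hymem : ∀ k ≤ N, y k ∈ Set.Icc (-L) 0 := fun k hk =>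
      ⟨le_trans hyN (hychain hk (le_refl N)), by rw [← hy0]; exact hychain (Nat.zero_le k) hk⟩
    have key : ∀ k, k ≤ N → s ∈ EquilibAux.dom G k ∧ y k = (EquilibAux.P G s k).1 ∧
        ∀ j, j < k → ((y j - y (j+1)) ^ 2)⁻¹ = (EquilibAux.P G s j).2 := by
      intro k
      induction k with
      | zero =>
        intro _
        exact ⟨⟨hs, by omega⟩, by rw [EquilibAux.P_zero, hy0], by omega⟩
      | succ k ih =>
        intro hk
        obtain ⟨hd, hyk, hf⟩ := ih (by omega)
        have hnew : ((y k - y (k+1)) ^ 2)⁻¹ = (EquilibAux.P G s k).2 := by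
          rcases Nat.eq_zero_or_pos k with hk0 | hk0
          · subst hk0
            have hys : y 0 - y 1 = s := by rw [hy0, hsdef]; ring
            rw [hys, EquilibAux.P_zero]
          · obtain ⟨m, rfl⟩ : ∃ m, k = m + 1 := ⟨k - 1, by omega⟩
            have hbal := hybal (m+1) (by omega) (by omega)
            simp only [Nat.add_sub_cancel] at hbal
            have hfm := hf m (by omega)
            have hFG : F (y (m+1)) = G (y (m+1)) := (hGeq _ (hymem (m+1) (by omega))).symm
            have e3 := EquilibAux.P_succ_snd (G := G) s m
            rw [← hyk] at e3
            rw [hfm, hFG] at hbal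
            linarith
        have hgap : 0 < y k - y (k+1) := sub_pos.2 (hydec k (by omega))
        have hfpos : 0 < (EquilibAux.P G s k).2 := by
          rw [← hnew]; positivity
        have hd1 : s ∈ EquilibAux.dom G (k+1) := by
          refine ⟨hs, fun i hi => ?_⟩
          rcases (by omega : i < k ∨ i = k) with h | h
          · exact hd.2 i h
          · subst h; exact hfpos
        refine ⟨hd1, ?_, ?_⟩
        · have hsq : y k - y (k+1) = Real.sqrt ((EquilibAux.P G s k).2)⁻¹ := by
            rw [← hnew, inv_inv, Real.sqrt_sq hgap.le]
          rw [EquilibAux.P_succ_fst, ← hyk, ← hsq]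
          ring
        · intro j hj
          rcases (by omega : j < k ∨ j = k) with h | h
          · exact hf j h
          · subst h; exact hnew
    obtain ⟨hdN, hyNx, hfall⟩ := key N le_rfl
    have hfNy : ((y (N-1) - y N) ^ 2)⁻¹ = (EquilibAux.P G s (N-1)).2 := by
      have h1 := hfall (N-1) (by omega)
      rwa [show N - 1 + 1 = N by omega] at h1
    have hsS1 : s ∈ S1 := by
      refine ⟨hdN, ?_, ?_⟩
      · rw [← hyNx]; exact hyN
      · rw [← hyNx, ← hfNy]
        rcases hybdry with ⟨h1, h2⟩ | ⟨h1, h2⟩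
        · calc G (y N) = F (-L) := by rw [h1]; exact hGeq _ ⟨le_rfl, by linarith⟩
            _ ≤ _ := h2
        · rw [h2]
          exact le_of_eq (hGeq _ (hymem N le_rfl))
    have hsle : s ≤ tstar := le_csSup hbdd hsS1
    have hseq : s = tstar := by
      by_contra hne
      have hslt : s < tstar := lt_of_le_of_ne hsle hne
      obtain ⟨_, hfm, _, _⟩ := EquilibAux.mono hGanti hs hslt (N-1)
        (EquilibAux.dom_mono (by omega) htstarN)
      obtain ⟨_, _, _, hxs'⟩ := EquilibAux.mono hGanti hs hslt N htstarN
      have hxstrict : (EquilibAux.P G tstar N).1 < (EquilibAux.P G s N).1 := hxs' (by omega)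
      have hGle : G ((EquilibAux.P G s N).1) ≤ G ((EquilibAux.P G tstar N).1) :=
        hGanti hxstrict.le
      have hstrict : G ((EquilibAux.P G s N).1) < (EquilibAux.P G s (N-1)).2 :=
        lt_of_le_of_lt (le_trans hGle hfstar) hfm
      rcases hybdry with ⟨h1, h2⟩ | ⟨h1, h2⟩
      · have hxeq : (EquilibAux.P G s N).1 = -L := by rw [← hyNx]; exact h1
        rw [hxeq] at hxstrict
        linarith
      · have hGy : ((y (N-1) - y N) ^ 2)⁻¹ = G (y N) := by
          rw [h2]; exact (hGeq _ (hymem N le_rfl)).symm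
        rw [hfNy, hyNx] at hGy
        linarith
    intro k hk
    show y k = (EquilibAux.P G tstar k).1
    rw [(key k hk).2.1, hseq]
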